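/- Let ρ be a d×d density matrix and let A₁, …, Aₙ be d×d complex matrices, each Hermitian and unitary (A_iᴴ = A_i and A_i² = 1), such that for all i ≠ j either A_i·A_j = A_j·A_i or A_i·A_j = −A_j·A_i. Define the variance Δ²_ρ(A_i) = tr(ρ·A_i²) − (Re tr(ρ·A_i))². Then Σᵢ Δ²_ρ(A_i) ≥ n − ϑ(G), where ϑ(G) = sSup{ Σᵢ X_{ii} : x ∈ ℝⁿ, X real symmetric n×n, [[1, xᵀ],[x, X]] positive semidefinite, X_{ii} = x_i, X_{ij} = 0 whenever A_i·A_j = −A_j·A_i }. -/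

import Mathlib

open Matrix ComplexOrder

private lemma trace_re_nonneg_of_psd {d : ℕ} {M : Matrix (Fin d) (Fin d) ℂ}
    (h : M.PosSemidef) : 0 ≤ M.trace.re := by
  have : (0:ℂ) ≤ M.trace := Finset.sum_nonneg fun i _ => by
    simpa [dotProduct, Pi.single_apply] using h.dotProduct_mulVec_nonneg (Pi.single i 1)
  exact (Complex.le_def.mp this).1

/-- quadratic form of the block matrix. -/
private lemma block_quad (n : ℕ) (x : Fin n → ℝ) (X : Matrix (Fin n) (Fin n) ℝ)
    (v : Fin 1 ⊕ Fin n → ℝ) :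
    star v ⬝ᵥ ((Matrix.fromBlocks (1 : Matrix (Fin 1) (Fin 1) ℝ)
          (Matrix.of fun (_ : Fin 1) j => x j)
          (Matrix.of fun i (_ : Fin 1) => x i) X) *ᵥ v) =
      v (Sum.inl 0) * v (Sum.inl 0)
        + 2 * v (Sum.inl 0) * ∑ j, x j * v (Sum.inr j)
        + ∑ i, ∑ j, v (Sum.inr i) * X i j * v (Sum.inr j) := by
  simp only [dotProduct, mulVec, Fintype.sum_sum_type, Matrix.fromBlocks,
    Fin.sum_univ_one, Matrix.one_apply, Sum.elim_inl, Sum.elim_inr, Matrix.of_apply,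
    star_trivial, if_true, eq_self_iff_true, Finset.mul_sum, Finset.sum_mul, mul_add, add_mul]
  rw [Finset.sum_add_distrib]
  have h1 : ∑ i, v (Sum.inr i) * (x i * v (Sum.inl 0))
      = ∑ i, v (Sum.inl 0) * (x i * v (Sum.inr i)) :=
    Finset.sum_congr rfl fun i _ => by ring
  have h2 : ∑ i, ∑ j, v (Sum.inr i) * (X i j * v (Sum.inr j))
      = ∑ i, ∑ j, v (Sum.inr i) * X i j * v (Sum.inr j) :=
    Finset.sum_congr rfl fun i _ => Finset.sum_congr rfl fun j _ => by ring
  have h3 : ∑ i, 2 * v (Sum.inl 0) * (x i * v (Sum.inr i))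
      = ∑ i, v (Sum.inl 0) * (x i * v (Sum.inr i))
        + ∑ i, v (Sum.inl 0) * (x i * v (Sum.inr i)) := by
    rw [← Finset.sum_add_distrib]
    exact Finset.sum_congr rfl fun i _ => by ring
  rw [h1, h2, h3]; ring

private lemma trace_expand {d n : ℕ} (ρ : Matrix (Fin d) (Fin d) ℂ) (htr : ρ.trace = 1)
    (A : Fin n → Matrix (Fin d) (Fin d) ℂ) (c : ℝ) (b : Fin n → ℝ) :
    (ρ * (((c:ℂ) • (1 : Matrix (Fin d) (Fin d) ℂ) + ∑ i, ((b i : ℂ) • A i))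
        * ((c:ℂ) • (1 : Matrix (Fin d) (Fin d) ℂ) + ∑ i, ((b i : ℂ) • A i)))).trace
      = (c:ℂ)*c + 2*(c:ℂ)*∑ i, (b i:ℂ) * (ρ * A i).trace
        + ∑ i, ∑ j, (b i:ℂ)*(b j:ℂ)*(ρ*(A i * A j)).trace := by
  simp only [mul_add, add_mul, Matrix.smul_mul, Matrix.mul_smul, Finset.sum_mul,
    Finset.mul_sum, smul_smul, Matrix.one_mul, Matrix.mul_one, trace_add, trace_smul,
    trace_sum, Matrix.mul_assoc, Finset.smul_sum, htr, smul_eq_mul]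
  rw [Finset.sum_add_distrib]
  have h1 : ∑ i, (b i:ℂ) * (c:ℂ) * (ρ * A i).trace
      = ∑ i, (c:ℂ) * (b i:ℂ) * (ρ * A i).trace :=
    Finset.sum_congr rfl fun i _ => by ring
  have h2 : ∑ x, ∑ y, (b x:ℂ) * (b y:ℂ) * (ρ * (A y * A x)).trace
      = ∑ i, ∑ j, (b i:ℂ) * (b j:ℂ) * (ρ * (A i * A j)).trace := by
    rw [Finset.sum_comm]
    exact Finset.sum_congr rfl fun i _ => Finset.sum_congr rfl fun j _ => by ring
  have h3 : ∑ i, 2 * (c:ℂ) * ((b i:ℂ) * (ρ * A i).trace)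
      = ∑ i, (c:ℂ) * (b i:ℂ) * (ρ * A i).trace
        + ∑ i, (c:ℂ) * (b i:ℂ) * (ρ * A i).trace := by
    rw [← Finset.sum_add_distrib]
    exact Finset.sum_congr rfl fun i _ => by ring
  rw [h1, h2, h3]; ring

/-- Additive uncertainty relation: for a density matrix `ρ` and
Hermitian unitary observables `A₁, …, Aₙ` that pairwise commute or anticommute,
`Σᵢ Δ²_ρ(Aᵢ) ≥ n − ϑ(G)`, where `Δ²_ρ(A) = tr(ρA²) − (Re tr(ρA))²` and `ϑ(G)` is
the Lovász theta number of the anticommutativity graph, expressed as a supremum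
over the feasible set of the theta SDP. -/
theorem additive_uncertainty_relation (d n : ℕ)
    (ρ : Matrix (Fin d) (Fin d) ℂ) (hρ : ρ.PosSemidef) (htr : ρ.trace = 1)
    (A : Fin n → Matrix (Fin d) (Fin d) ℂ)
    (hherm : ∀ i, (A i)ᴴ = A i) (hunit : ∀ i, A i * A i = 1)
    (hcomm : ∀ i j, i ≠ j → A i * A j = A j * A i ∨ A i * A j = -(A j * A i)) :
    (n : ℝ) -
      sSup {t : ℝ | ∃ (x : Fin n → ℝ) (X : Matrix (Fin n) (Fin n) ℝ),
        X.IsSymm ∧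
        (Matrix.fromBlocks (1 : Matrix (Fin 1) (Fin 1) ℝ)
          (Matrix.of fun (_ : Fin 1) j => x j)
          (Matrix.of fun i (_ : Fin 1) => x i) X).PosSemidef ∧
        (∀ i, X i i = x i) ∧
        (∀ i j, A i * A j = -(A j * A i) → X i j = 0) ∧
        t = ∑ i, X i i} ≤
    ∑ i, ((ρ * (A i * A i)).trace.re - ((ρ * A i).trace.re) ^ 2) := by
  set S := {t : ℝ | ∃ (x : Fin n → ℝ) (X : Matrix (Fin n) (Fin n) ℝ),
        X.IsSymm ∧
        (Matrix.fromBlocks (1 : Matrix (Fin 1) (Fin 1) ℝ)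
          (Matrix.of fun (_ : Fin 1) j => x j)
          (Matrix.of fun i (_ : Fin 1) => x i) X).PosSemidef ∧
        (∀ i, X i i = x i) ∧
        (∀ i j, A i * A j = -(A j * A i) → X i j = 0) ∧
        t = ∑ i, X i i} with hS
  set a : Fin n → ℝ := fun i => ((ρ * A i).trace).re with ha
  -- conjugation symmetry of traces
  have hconj : ∀ i j, (ρ * (A j * A i)).trace = star ((ρ * (A i * A j)).trace) := by
    intro i j
    rw [← trace_conjTranspose, conjTranspose_mul, conjTranspose_mul, hherm, hherm, hρ.1,
      Matrix.mul_assoc, trace_mul_comm, Matrix.mul_assoc]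
  have hresymm : ∀ i j, ((ρ * (A j * A i)).trace).re = ((ρ * (A i * A j)).trace).re := by
    intro i j; rw [hconj i j]; simp
  have hAA : ∀ i, ((ρ * (A i * A i)).trace).re = 1 := by
    intro i; rw [hunit i, Matrix.mul_one, htr]; simp
  -- the witness matrices
  set x : Fin n → ℝ := fun i => a i * a i with hx
  set X : Matrix (Fin n) (Fin n) ℝ :=
    Matrix.of fun i j => a i * a j * ((ρ * (A i * A j)).trace).re with hX
  have hXsymm : X.IsSymm := by
    ext i j
    simp only [hX, Matrix.transpose_apply, Matrix.of_apply]
    rw [hresymm j i]; ring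
  -- boundedness of S
  have hub : ∀ t ∈ S, t ≤ (n : ℝ) := by
    rintro t ⟨y, Y, hYsymm, hYpsd, hdiag, -, rfl⟩
    have hy1 : ∀ i, y i ≤ 1 := by
      intro i
      have h1 := hYpsd.dotProduct_mulVec_nonneg (Sum.elim (fun _ => y i) (fun j => if j = i then (-1:ℝ) else 0))
      have h2 := hYpsd.dotProduct_mulVec_nonneg (Sum.elim (fun _ => 0) (fun j => if j = i then (1:ℝ) else 0))
      rw [block_quad] at h1 h2
      simp only [Sum.elim_inl, Sum.elim_inr, mul_ite, ite_mul, mul_zero, zero_mul,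
        mul_neg, neg_mul, mul_one, one_mul, Finset.sum_ite_eq', Finset.mem_univ,
        if_true, Finset.sum_ite_eq, neg_neg, zero_add, add_zero,
        Finset.sum_neg_distrib] at h1 h2
      rw [hdiag i] at h1 h2
      nlinarith [h1, h2]
    calc ∑ i, Y i i = ∑ i, y i := by
          exact Finset.sum_congr rfl fun i _ => hdiag i
      _ ≤ ∑ _i : Fin n, (1:ℝ) := Finset.sum_le_sum fun i _ => hy1 i
      _ = n := by simp
  -- membership of ∑ aᵢ² in S
  have hmem : (∑ i, a i * a i) ∈ S := by
    refine ⟨x, X, hXsymm, ?_, ?_, ?_, ?_⟩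
    · refine posSemidef_iff_dotProduct_mulVec.mpr ⟨?_, ?_⟩
      · ext p q
        cases p with
        | inl p => cases q with
          | inl q =>
            have hpq : p = q := Subsingleton.elim p q
            subst hpq
            simp [Matrix.conjTranspose_apply]
          | inr q => simp [Matrix.conjTranspose_apply]
        | inr p => cases q with
          | inl q => simp [Matrix.conjTranspose_apply]
          | inr q =>
            simp only [Matrix.conjTranspose_apply, Matrix.fromBlocks_apply₂₂, star_trivial]
            exact congrFun (congrFun hXsymm.eq p) q
      · intro v
        set c : ℝ := v (Sum.inl 0) with hc
        set w : Fin n → ℝ := fun i => v (Sum.inr i) with hw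
        set b : Fin n → ℝ := fun i => w i * a i with hb
        set B : Matrix (Fin d) (Fin d) ℂ :=
          (c:ℂ) • (1 : Matrix (Fin d) (Fin d) ℂ) + ∑ i, ((b i : ℂ) • A i) with hB
        have hBh : Bᴴ = B := by
          simp [hB, Matrix.conjTranspose_add, Matrix.conjTranspose_smul,
            Matrix.conjTranspose_one, Matrix.conjTranspose_sum, hherm,
            Complex.star_def, Complex.conj_ofReal]
        have hBpsd : (Bᴴ * ρ * B).PosSemidef := hρ.conjTranspose_mul_mul_same B
        have htrB : ((Bᴴ * ρ * B).trace) = (ρ * (B * B)).trace := by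
          calc (Bᴴ * ρ * B).trace = (B * (ρ * B)).trace := by rw [hBh, Matrix.mul_assoc]
            _ = ((ρ * B) * B).trace := trace_mul_comm _ _
            _ = (ρ * (B * B)).trace := by rw [Matrix.mul_assoc]
        have hkey : star v ⬝ᵥ ((Matrix.fromBlocks (1 : Matrix (Fin 1) (Fin 1) ℝ)
              (Matrix.of fun (_ : Fin 1) j => x j)
              (Matrix.of fun i (_ : Fin 1) => x i) X) *ᵥ v)
            = ((Bᴴ * ρ * B).trace).re := by
          rw [block_quad, htrB, hB, trace_expand ρ htr A c b]
          simp only [Complex.add_re, Complex.mul_re, Complex.ofReal_re, Complex.ofReal_im,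
            Complex.re_sum, Complex.im_sum, Complex.mul_im, zero_mul, mul_zero, sub_zero,
            add_zero, zero_add, Complex.re_ofNat, Complex.im_ofNat]
          have e1 : ∑ j, x j * w j = ∑ j, b j * ((ρ * A j).trace).re :=
            Finset.sum_congr rfl fun j _ => by
              simp only [hx, hb, hw, ha]; ring
          have e2 : ∑ i, ∑ j, w i * X i j * w j
              = ∑ i, ∑ j, b i * b j * ((ρ * (A i * A j)).trace).re :=
            Finset.sum_congr rfl fun i _ => Finset.sum_congr rfl fun j _ => by
              simp only [hX, hb, hw, Matrix.of_apply]; ring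
          rw [e1, e2]
        rw [hkey]
        exact trace_re_nonneg_of_psd hBpsd
    · intro i
      simp only [hX, hx, Matrix.of_apply, hAA i, mul_one]
    · intro i j hij
      have : (ρ * (A i * A j)).trace = -(ρ * (A j * A i)).trace := by
        rw [hij]; simp
      have h0 : ((ρ * (A i * A j)).trace).re = 0 := by
        have := congrArg Complex.re this
        rw [Complex.neg_re, hresymm i j] at this
        linarith
      simp only [hX, Matrix.of_apply, h0, mul_zero]
    · exact (Finset.sum_congr rfl fun i _ => by
        simp only [hX, hx, Matrix.of_apply, hAA i, mul_one]).symm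
  have hsup : (∑ i, a i * a i) ≤ sSup S := le_csSup ⟨(n:ℝ), hub⟩ hmem
  have hrhs : ∑ i, ((ρ * (A i * A i)).trace.re - ((ρ * A i).trace.re) ^ 2)
      = (n:ℝ) - ∑ i, a i * a i := by
    rw [Finset.sum_sub_distrib]
    have : ∑ i, (ρ * (A i * A i)).trace.re = (n:ℝ) := by
      rw [Finset.sum_congr rfl fun i _ => hAA i]; simp
    rw [this]
    congr 1
    exact Finset.sum_congr rfl fun i _ => by rw [ha]; ring
  rw [hrhs]
  linarith
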